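/- Let G be a k-regular finite simple connected super-λ'' graph with girth exactly 3. If k ≥ 6, then G is super-λ' and ρ'(G) ≥ k − 3; if k = 5, then G is super-λ' and ρ'(G) = 2. -/

import Mathlib

open SimpleGraph

variable {V : Type*}

/-- The degree of a vertex, as the cardinality of its neighbor set. -/
noncomputable def degN (G : SimpleGraph V) (v : V) : ℕ := (G.neighborSet v).ncard

/-- The minimum degree `δ(G)`. -/
noncomputable def minDeg (G : SimpleGraph V) : ℕ := sInf {k | ∃ v, degN G v = k}

/-- `d_G(X)`: the number of edges of `G` with exactly one endpoint in `X`. -/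
noncomputable def dOut (G : SimpleGraph V) (X : Set V) : ℕ :=
  {e ∈ G.edgeSet | ∃ x ∈ X, ∃ y ∈ Xᶜ, e = s(x, y)}.ncard

/-- `F` is an `h`-extra edge-cut of `G`: a set of edges of `G` whose removal disconnects `G`
and such that every connected component of `G - F` has more than `h` vertices. -/
def IsExtraEdgeCut (G : SimpleGraph V) (h : ℕ) (F : Set (Sym2 V)) : Prop :=
  F ⊆ G.edgeSet ∧ ¬(G.deleteEdges F).Connected ∧
    ∀ c : (G.deleteEdges F).ConnectedComponent, h < c.supp.ncard

/-- `G` is `λ^(h)`-connected: an `h`-extra edge-cut exists. -/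
def LambdaConn (G : SimpleGraph V) (h : ℕ) : Prop := ∃ F, IsExtraEdgeCut G h F

/-- The `h`-extra edge-connectivity `λ^(h)(G)`: the minimum cardinality of an
`h`-extra edge-cut. -/
noncomputable def lambdaH (G : SimpleGraph V) (h : ℕ) : ℕ :=
  sInf {k | ∃ F, IsExtraEdgeCut G h F ∧ F.ncard = k}

/-- `ξ_h(G)`: the minimum of `d_G(X)` over vertex sets `X` of size `h + 1` inducing a
connected subgraph. -/
noncomputable def xiH (G : SimpleGraph V) (h : ℕ) : ℕ :=
  sInf {k | ∃ X : Set V, X.ncard = h + 1 ∧ (G.induce X).Connected ∧ dOut G X = k}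

/-- `G` is super-`λ^(h)`: it is connected, `λ^(h)`-connected, `λ^(h)`-optimal
(`λ^(h)(G) = ξ_h(G)`), and every minimum `h`-extra edge-cut leaves a component with
exactly `h + 1` vertices. -/
def SuperLambda (G : SimpleGraph V) (h : ℕ) : Prop :=
  G.Connected ∧ LambdaConn G h ∧ lambdaH G h = xiH G h ∧
    ∀ F : Set (Sym2 V), IsExtraEdgeCut G h F → F.ncard = lambdaH G h →
      ∃ c : (G.deleteEdges F).ConnectedComponent, c.supp.ncard = h + 1

/-- The persistence `ρ^(h)(G)`: the largest `m` such that `G - F` is super-`λ^(h)` for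
every set `F` of at most `m` edges of `G`. -/
noncomputable def rhoH (G : SimpleGraph V) (h : ℕ) : ℕ :=
  sSup {m : ℕ | ∀ F : Set (Sym2 V), F ⊆ G.edgeSet → F.ncard ≤ m →
    SuperLambda (G.deleteEdges F) h}

/-- `ξ(G)`: the minimum edge-degree `deg x + deg y - 2` over the edges `xy` of `G`. -/
noncomputable def xiEdge (G : SimpleGraph V) : ℕ :=
  sInf {k | ∃ x y, G.Adj x y ∧ degN G x + degN G y - 2 = k}

/-- `η(G)`: the number of edges of `G` whose edge-degree equals `ξ(G)`. -/
noncomputable def eta (G : SimpleGraph V) : ℕ :=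
  {e ∈ G.edgeSet | ∃ x y, e = s(x, y) ∧ degN G x + degN G y - 2 = xiEdge G}.ncard


/-! ### Auxiliary machinery -/

section Aux

variable {V : Type*} [Fintype V]

set_option linter.unusedSectionVars false

/-- The set of edges of `G` with exactly one endpoint in `X`. -/
private def crossSet (G : SimpleGraph V) (X : Set V) : Set (Sym2 V) :=
  {e ∈ G.edgeSet | ∃ x ∈ X, ∃ y ∈ Xᶜ, e = s(x, y)}

private lemma dOut_eq_crossSet (G : SimpleGraph V) (X : Set V) :
    dOut G X = (crossSet G X).ncard := rfl

private lemma mem_crossSet {G : SimpleGraph V} {X : Set V} {e : Sym2 V} :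
    e ∈ crossSet G X ↔ ∃ x ∈ X, ∃ y, y ∉ X ∧ G.Adj x y ∧ e = s(x, y) := by
  constructor
  · rintro ⟨he, x, hx, y, hy, rfl⟩
    exact ⟨x, hx, y, hy, (G.mem_edgeSet).mp he, rfl⟩
  · rintro ⟨x, hx, y, hy, hadj, rfl⟩
    exact ⟨(G.mem_edgeSet).mpr hadj, x, hx, y, hy, rfl⟩

private lemma crossSet_subset_edgeSet (G : SimpleGraph V) (X : Set V) :
    crossSet G X ⊆ G.edgeSet := fun _ he => he.1

private lemma not_mem_crossSet_of_both {G : SimpleGraph V} {X : Set V} {a b : V}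
    (ha : a ∈ X) (hb : b ∈ X) : s(a, b) ∉ crossSet G X := by
  intro h
  obtain ⟨x, hx, y, hy, hadj, heq⟩ := mem_crossSet.mp h
  rcases Sym2.eq_iff.mp heq with ⟨h1, h2⟩ | ⟨h1, h2⟩
  · exact hy (h2 ▸ hb)
  · exact hy (h1 ▸ ha)

private lemma crossSet_deleteEdges (G : SimpleGraph V) (F : Set (Sym2 V)) (X : Set V) :
    crossSet (G.deleteEdges F) X = crossSet G X \ F := by
  ext e
  simp only [mem_crossSet, Set.mem_diff, SimpleGraph.deleteEdges_adj]
  constructor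
  · rintro ⟨x, hx, y, hy, ⟨hadj, hF⟩, rfl⟩
    exact ⟨⟨x, hx, y, hy, hadj, rfl⟩, hF⟩
  · rintro ⟨⟨x, hx, y, hy, hadj, rfl⟩, hF⟩
    exact ⟨x, hx, y, hy, ⟨hadj, hF⟩, rfl⟩

private lemma ncard_inter_diff (s t : Set V) : (s ∩ t).ncard + (s \ t).ncard = s.ncard := by
  rw [← Set.ncard_union_eq (Set.disjoint_sdiff_right.mono_left Set.inter_subset_right)
    (Set.toFinite _) (Set.toFinite _), Set.inter_union_diff]

/-- image of a vertex's "outgoing" neighbours as edges -/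
private def img (G : SimpleGraph V) (x : V) (X : Set V) : Set (Sym2 V) :=
  (fun z => s(x, z)) '' (G.neighborSet x \ X)

private lemma mem_img {G : SimpleGraph V} {x : V} {X : Set V} {e : Sym2 V} :
    e ∈ img G x X ↔ ∃ z, G.Adj x z ∧ z ∉ X ∧ e = s(x, z) := by
  simp only [img, Set.mem_image, Set.mem_diff, SimpleGraph.mem_neighborSet]
  tauto

private lemma ncard_img (G : SimpleGraph V) (x : V) (X : Set V) :
    (img G x X).ncard = (G.neighborSet x \ X).ncard := by
  apply Set.ncard_image_of_injOn
  intro z1 _ z2 _ he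
  rcases Sym2.eq_iff.mp he with ⟨_, h2⟩ | ⟨h1, h2⟩
  · exact h2
  · rw [h2, ← h1]

private lemma img_disjoint {G : SimpleGraph V} {x y : V} {X : Set V}
    (hx : x ∈ X) (hy : y ∈ X) (hne : x ≠ y) : Disjoint (img G x X) (img G y X) := by
  rw [Set.disjoint_left]
  intro e hex hey
  obtain ⟨z, _, hz, rfl⟩ := mem_img.mp hex
  obtain ⟨w, _, hw, heq⟩ := mem_img.mp hey
  rcases Sym2.eq_iff.mp heq with ⟨h1, _⟩ | ⟨h1, h2⟩
  · exact hne h1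
  · exact hz (by rw [h2]; exact hy)

private lemma crossSet_pair {G : SimpleGraph V} {x y : V} :
    crossSet G {x, y} = img G x {x, y} ∪ img G y {x, y} := by
  ext e
  simp only [Set.mem_union, mem_crossSet, mem_img]
  constructor
  · rintro ⟨u, hu, v, hv, hadj, rfl⟩
    rcases hu with rfl | rfl
    · exact Or.inl ⟨v, hadj, hv, rfl⟩
    · exact Or.inr ⟨v, hadj, hv, rfl⟩
  · rintro (⟨z, hadj, hz, rfl⟩ | ⟨z, hadj, hz, rfl⟩)
    · exact ⟨x, by simp, z, hz, hadj, rfl⟩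
    · exact ⟨y, by simp, z, hz, hadj, rfl⟩

private lemma crossSet_triple {G : SimpleGraph V} {a b c : V} :
    crossSet G {a, b, c} = img G a {a, b, c} ∪ (img G b {a, b, c} ∪ img G c {a, b, c}) := by
  ext e
  simp only [Set.mem_union, mem_crossSet, mem_img]
  constructor
  · rintro ⟨u, hu, v, hv, hadj, rfl⟩
    rcases hu with rfl | rfl | rfl
    · exact Or.inl ⟨v, hadj, hv, rfl⟩
    · exact Or.inr (Or.inl ⟨v, hadj, hv, rfl⟩)
    · exact Or.inr (Or.inr ⟨v, hadj, hv, rfl⟩)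
  · rintro (⟨z, hadj, hz, rfl⟩ | ⟨z, hadj, hz, rfl⟩ | ⟨z, hadj, hz, rfl⟩)
    · exact ⟨a, by simp, z, hz, hadj, rfl⟩
    · exact ⟨b, by simp, z, hz, hadj, rfl⟩
    · exact ⟨c, by simp, z, hz, hadj, rfl⟩

private lemma dOut_pair {G : SimpleGraph V} {x y : V} (h : G.Adj x y) :
    dOut G {x, y} + 2 = degN G x + degN G y := by
  have hne : x ≠ y := h.ne
  have hdisj := img_disjoint (G := G) (X := ({x, y} : Set V)) (by simp) (by simp) hne
  rw [dOut_eq_crossSet, crossSet_pair, Set.ncard_union_eq hdisj (Set.toFinite _) (Set.toFinite _),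
    ncard_img, ncard_img]
  have hx : G.neighborSet x ∩ {x, y} = {y} := by
    ext z
    simp only [Set.mem_inter_iff, SimpleGraph.mem_neighborSet, Set.mem_insert_iff,
      Set.mem_singleton_iff]
    constructor
    · rintro ⟨hadj, rfl | rfl⟩
      · exact absurd hadj (G.irrefl)
      · rfl
    · rintro rfl; exact ⟨h, Or.inr rfl⟩
  have hy : G.neighborSet y ∩ {x, y} = {x} := by
    ext z
    simp only [Set.mem_inter_iff, SimpleGraph.mem_neighborSet, Set.mem_insert_iff,
      Set.mem_singleton_iff]
    constructor
    · rintro ⟨hadj, rfl | rfl⟩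
      · rfl
      · exact absurd hadj (G.irrefl)
    · rintro rfl; exact ⟨h.symm, Or.inl rfl⟩
  have h1 := ncard_inter_diff (G.neighborSet x) ({x, y} : Set V)
  have h2 := ncard_inter_diff (G.neighborSet y) ({x, y} : Set V)
  rw [hx, Set.ncard_singleton] at h1
  rw [hy, Set.ncard_singleton] at h2
  unfold degN
  omega

private lemma dOut_singleton (G : SimpleGraph V) (v : V) : dOut G {v} = degN G v := by
  have : crossSet G {v} = img G v {v} := by
    ext e
    simp only [mem_crossSet, mem_img]
    constructor
    · rintro ⟨u, hu, w, hw, hadj, rfl⟩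
      rcases hu with rfl
      exact ⟨w, hadj, hw, rfl⟩
    · rintro ⟨z, hadj, hz, rfl⟩
      exact ⟨v, rfl, z, hz, hadj, rfl⟩
  rw [dOut_eq_crossSet, this, ncard_img]
  have : G.neighborSet v \ {v} = G.neighborSet v := by
    apply Set.diff_singleton_eq_self
    simp [SimpleGraph.mem_neighborSet]
  rw [this]; rfl

private lemma dOut_triple {G : SimpleGraph V} {a b c : V}
    (hab : a ≠ b) (hac : a ≠ c) (hbc : b ≠ c) :
    dOut G {a, b, c} = (G.neighborSet a \ {a, b, c}).ncard +
      ((G.neighborSet b \ {a, b, c}).ncard + (G.neighborSet c \ {a, b, c}).ncard) := by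
  have ha : a ∈ ({a, b, c} : Set V) := by simp
  have hb : b ∈ ({a, b, c} : Set V) := by simp
  have hc : c ∈ ({a, b, c} : Set V) := by simp
  have d1 := img_disjoint (G := G) hb hc hbc
  have d2 : Disjoint (img G a {a, b, c}) (img G b {a, b, c} ∪ img G c {a, b, c}) :=
    Set.disjoint_union_right.mpr ⟨img_disjoint (G := G) ha hb hab,
      img_disjoint (G := G) ha hc hac⟩
  rw [dOut_eq_crossSet, crossSet_triple,
    Set.ncard_union_eq d2 (Set.toFinite _) (Set.toFinite _),
    Set.ncard_union_eq d1 (Set.toFinite _) (Set.toFinite _), ncard_img, ncard_img, ncard_img]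

end Aux


section Comp

variable {V : Type*} [Fintype V]

set_option linter.unusedSectionVars false

private lemma walk_mem_closed {G : SimpleGraph V} {S : Set V}
    (hS : ∀ a ∈ S, ∀ b, G.Adj a b → b ∈ S) :
    ∀ {a b : V}, G.Walk a b → a ∈ S → b ∈ S := by
  intro a b w
  induction w with
  | nil => exact id
  | cons h _ ih => intro ha; exact ih (hS _ ha _ h)

private lemma supp_closed {G : SimpleGraph V} (c : G.ConnectedComponent) {v w : V}
    (hv : v ∈ c.supp) (h : G.Adj v w) : w ∈ c.supp := by
  rw [SimpleGraph.ConnectedComponent.mem_supp_iff] at hv ⊢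
  rw [← hv]
  exact SimpleGraph.ConnectedComponent.eq.mpr h.symm.reachable

private lemma supp_subset_closed {G : SimpleGraph V} {S : Set V}
    (hS : ∀ a ∈ S, ∀ b, G.Adj a b → b ∈ S) {u : V} (hu : u ∈ S) :
    (G.connectedComponentMk u).supp ⊆ S := by
  intro v hv
  rw [SimpleGraph.ConnectedComponent.mem_supp_iff, SimpleGraph.ConnectedComponent.eq] at hv
  obtain ⟨w⟩ := hv.symm
  exact walk_mem_closed hS w hu

private lemma reachable_of_mem_supp {G : SimpleGraph V} {c : G.ConnectedComponent} {v w : V}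
    (hv : v ∈ c.supp) (hw : w ∈ c.supp) : G.Reachable v w := by
  rw [SimpleGraph.ConnectedComponent.mem_supp_iff] at hv hw
  exact SimpleGraph.ConnectedComponent.eq.mp (hv.trans hw.symm)

private lemma supp_ncard_ge_deg {G : SimpleGraph V} (c : G.ConnectedComponent) {v : V}
    (hv : v ∈ c.supp) : degN G v + 1 ≤ c.supp.ncard := by
  have hsub : insert v (G.neighborSet v) ⊆ c.supp := by
    intro z hz
    rcases hz with rfl | hz
    · exact hv
    · exact supp_closed c hv hz
  have hnm : v ∉ G.neighborSet v := by simp [SimpleGraph.mem_neighborSet]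
  calc degN G v + 1 = (insert v (G.neighborSet v)).ncard := by
        rw [Set.ncard_insert_of_notMem hnm (Set.toFinite _)]; rfl
    _ ≤ c.supp.ncard := Set.ncard_le_ncard hsub (Set.toFinite _)

private lemma supp_pair {G : SimpleGraph V} (c : G.ConnectedComponent)
    (h2 : c.supp.ncard = 2) : ∃ x y, x ≠ y ∧ c.supp = {x, y} ∧ G.Adj x y := by
  obtain ⟨x, y, hne, hxy⟩ := Set.ncard_eq_two.mp h2
  refine ⟨x, y, hne, hxy, ?_⟩
  have hx : x ∈ c.supp := by rw [hxy]; simp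
  have hy : y ∈ c.supp := by rw [hxy]; simp
  obtain ⟨w⟩ := reachable_of_mem_supp hx hy
  cases w with
  | nil => exact absurd rfl hne
  | @cons _ z _ h p =>
    have hz : z ∈ c.supp := supp_closed c hx h
    rw [hxy] at hz
    simp only [Set.mem_insert_iff, Set.mem_singleton_iff] at hz
    rcases hz with rfl | rfl
    · exact absurd rfl h.ne
    · exact h

private lemma induce_reachable_of_closed {G : SimpleGraph V} {S : Set V}
    (hS : ∀ a ∈ S, ∀ b, G.Adj a b → b ∈ S) :
    ∀ {a b : V} (_ : G.Walk a b) (ha : a ∈ S) (hb : b ∈ S),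
      (G.induce S).Reachable ⟨a, ha⟩ ⟨b, hb⟩ := by
  intro a b w
  induction w with
  | nil => intro ha hb; rfl
  | cons h p ih =>
    intro ha hb
    rename_i u z _
    have hz : z ∈ S := hS _ ha _ h
    have hadj : (G.induce S).Adj ⟨u, ha⟩ ⟨z, hz⟩ := h
    exact hadj.reachable.trans (ih hz hb)

private lemma induce_supp_connected {G : SimpleGraph V} (c : G.ConnectedComponent) :
    (G.induce c.supp).Connected := by
  obtain ⟨v, hv⟩ := c.exists_rep
  have hvm : v ∈ c.supp := by
    rw [SimpleGraph.ConnectedComponent.mem_supp_iff]; exact hv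
  rw [SimpleGraph.connected_iff]
  refine ⟨?_, ⟨⟨v, hvm⟩⟩⟩
  rintro ⟨a, ha⟩ ⟨b, hb⟩
  obtain ⟨w⟩ := reachable_of_mem_supp ha hb
  exact induce_reachable_of_closed (fun x hx y hy => supp_closed c hx hy) w ha hb

private lemma induce_connected_mono {G G' : SimpleGraph V} (h : G ≤ G') (S : Set V)
    (hc : (G.induce S).Connected) : (G'.induce S).Connected := by
  apply hc.mono
  intro a b hab
  exact h hab

private lemma crossSet_supp_subset {G : SimpleGraph V} {F : Set (Sym2 V)}
    (c : (G.deleteEdges F).ConnectedComponent) : crossSet G c.supp ⊆ F := by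
  intro e he
  obtain ⟨x, hx, y, hy, hadj, rfl⟩ := mem_crossSet.mp he
  by_contra hef
  exact hy (supp_closed c hx (SimpleGraph.deleteEdges_adj.mpr ⟨hadj, hef⟩))

private lemma pair_conn_adj {G : SimpleGraph V} {x y : V} (hne : x ≠ y)
    (hc : (G.induce ({x, y} : Set V)).Connected) : G.Adj x y := by
  have hx : x ∈ ({x, y} : Set V) := by simp
  have hy : y ∈ ({x, y} : Set V) := by simp
  obtain ⟨w⟩ := hc.preconnected ⟨x, hx⟩ ⟨y, hy⟩
  cases w with
  | nil => exact absurd rfl hne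
  | @cons _ z _ h p =>
    have hadj : G.Adj x z.val := h
    rcases z.2 with h1 | h1
    · exact absurd h1.symm hadj.ne
    · rw [← h1]; exact hadj

private lemma adj_pair_conn {G : SimpleGraph V} {x y : V} (h : G.Adj x y) :
    (G.induce ({x, y} : Set V)).Connected := by
  have hx : x ∈ ({x, y} : Set V) := by simp
  have hy : y ∈ ({x, y} : Set V) := by simp
  have hadj : (G.induce ({x, y} : Set V)).Adj ⟨x, hx⟩ ⟨y, hy⟩ := h
  rw [SimpleGraph.connected_iff]
  refine ⟨?_, ⟨⟨x, hx⟩⟩⟩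
  rintro ⟨a, ha⟩ ⟨b, hb⟩
  have key : ∀ (u : V) (hu : u ∈ ({x, y} : Set V)),
      (G.induce ({x, y} : Set V)).Reachable ⟨u, hu⟩ ⟨x, hx⟩ := by
    intro w hw
    have hm := hw
    rcases hm with h1 | h1
    · subst h1; rfl
    · have : (G.induce ({x, y} : Set V)).Adj ⟨w, hw⟩ ⟨x, hx⟩ := by
        have : G.Adj w x := by rw [h1]; exact h.symm
        exact this
      exact this.reachable
  exact (key a ha).trans (key b hb).symm

private lemma triple_conn {G : SimpleGraph V} {a b c : V}
    (hab : G.Adj a b) (hac : G.Adj a c) :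
    (G.induce ({a, b, c} : Set V)).Connected := by
  have ha : a ∈ ({a, b, c} : Set V) := by simp
  rw [SimpleGraph.connected_iff]
  refine ⟨?_, ⟨⟨a, ha⟩⟩⟩
  rintro ⟨u, hu⟩ ⟨v, hv⟩
  have key : ∀ (u : V) (hu : u ∈ ({a, b, c} : Set V)),
      (G.induce ({a, b, c} : Set V)).Reachable ⟨u, hu⟩ ⟨a, ha⟩ := by
    intro w hw
    have hm := hw
    rcases hm with h1 | h1 | h1
    · subst h1; rfl
    · have : (G.induce ({a, b, c} : Set V)).Adj ⟨w, hw⟩ ⟨a, ha⟩ := by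
        have : G.Adj w a := by rw [h1]; exact hab.symm
        exact this
      exact this.reachable
    · have : (G.induce ({a, b, c} : Set V)).Adj ⟨w, hw⟩ ⟨a, ha⟩ := by
        have : G.Adj w a := by rw [h1]; exact hac.symm
        exact this
      exact this.reachable
  exact (key u hu).trans (key v hv).symm

private lemma ncard_pair {x y : V} (h : x ≠ y) : ({x, y} : Set V).ncard = 2 := by
  rw [Set.ncard_insert_of_notMem (by simpa using h) (Set.toFinite _), Set.ncard_singleton]

end Comp


section Cut

variable {V : Type*} [Fintype V]

set_option linter.unusedSectionVars false

private lemma not_mem_crossSet_of_neither {G : SimpleGraph V} {X : Set V} {a b : V}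
    (ha : a ∉ X) (hb : b ∉ X) : s(a, b) ∉ crossSet G X := by
  intro h
  obtain ⟨x, hx, y, hy, hadj, heq⟩ := mem_crossSet.mp h
  rcases Sym2.eq_iff.mp heq with ⟨h1, h2⟩ | ⟨h1, h2⟩
  · exact ha (by rw [h1]; exact hx)
  · exact hb (by rw [h2]; exact hx)

private lemma closed_del_cross {G : SimpleGraph V} {X : Set V} :
    ∀ a ∈ X, ∀ b, (G.deleteEdges (crossSet G X)).Adj a b → b ∈ X := by
  intro a ha b hab
  rw [SimpleGraph.deleteEdges_adj] at hab
  by_contra hb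
  exact hab.2 (mem_crossSet.mpr ⟨a, ha, b, hb, hab.1, rfl⟩)

private lemma deg_split (G : SimpleGraph V) (v : V) (X : Set V) :
    degN G v = (G.neighborSet v ∩ X).ncard + (G.neighborSet v \ X).ncard :=
  (ncard_inter_diff _ _).symm

private lemma inter_ncard_le (G : SimpleGraph V) (v : V) (X : Set V) :
    (G.neighborSet v ∩ X).ncard ≤ X.ncard :=
  Set.ncard_le_ncard Set.inter_subset_right (Set.toFinite _)

private lemma ncard_triple {a b c : V} (hab : a ≠ b) (hac : a ≠ c) (hbc : b ≠ c) :
    ({a, b, c} : Set V).ncard = 3 :=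
  Set.ncard_eq_three.mpr ⟨a, b, c, hab, hac, hbc, rfl⟩

private lemma deg_del_cross_ge {G : SimpleGraph V} {X : Set V} {v : V} (hv : v ∉ X) :
    (G.neighborSet v \ X).ncard ≤ degN (G.deleteEdges (crossSet G X)) v := by
  apply Set.ncard_le_ncard _ (Set.toFinite _)
  rintro z ⟨hz, hzX⟩
  rw [SimpleGraph.mem_neighborSet] at hz ⊢
  rw [SimpleGraph.deleteEdges_adj]
  exact ⟨hz, not_mem_crossSet_of_neither hv hzX⟩

private lemma ncard_lt_of_pair_subset {x y : V} {S : Set V} (hne : x ≠ y)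
    (hx : x ∈ S) (hy : y ∈ S) : 1 < S.ncard :=
  (Set.one_lt_ncard_iff (Set.toFinite _)).mpr ⟨x, y, hx, hy, hne⟩

private lemma isolate_pair {G : SimpleGraph V} {x y : V} (hdeg : ∀ v, 3 ≤ degN G v)
    (hxy : G.Adj x y) : IsExtraEdgeCut G 1 (crossSet G {x, y}) := by
  set X : Set V := {x, y} with hX
  set C := crossSet G X with hC
  have hxX : x ∈ X := by simp [hX]
  have hyX : y ∈ X := by simp [hX]
  have hadj2 : (G.deleteEdges C).Adj x y :=
    SimpleGraph.deleteEdges_adj.mpr ⟨hxy, not_mem_crossSet_of_both hxX hyX⟩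
  have hsupp : ((G.deleteEdges C).connectedComponentMk x).supp ⊆ X :=
    supp_subset_closed closed_del_cross hxX
  -- a vertex outside X
  have hXcard : X.ncard ≤ 2 := by
    rw [hX]; exact (Set.ncard_insert_le _ _).trans (by simp)
  have houtx : 1 ≤ (G.neighborSet x \ X).ncard := by
    have := deg_split G x X
    have h2 := inter_ncard_le G x X
    have h3 := hdeg x
    omega
  obtain ⟨w, hwN, hwX⟩ :=
    Set.nonempty_of_ncard_ne_zero (s := G.neighborSet x \ X) (by omega)
  refine ⟨crossSet_subset_edgeSet G X, ?_, ?_⟩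
  · intro hcon
    have hreach : (G.deleteEdges C).Reachable w x := hcon.preconnected w x
    have : w ∈ ((G.deleteEdges C).connectedComponentMk x).supp := by
      rw [SimpleGraph.ConnectedComponent.mem_supp_iff]
      exact SimpleGraph.ConnectedComponent.eq.mpr hreach
    exact hwX (hsupp this)
  · intro c
    obtain ⟨v, hv⟩ := c.exists_rep
    have hvm : v ∈ c.supp := by
      rw [SimpleGraph.ConnectedComponent.mem_supp_iff]; exact hv
    by_cases hvX : v ∈ X
    · -- component contains both x and y
      rcases hvX with h1 | h1
      · subst h1
        exact ncard_lt_of_pair_subset hxy.ne hvm (supp_closed c hvm hadj2)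
      · rw [Set.mem_singleton_iff] at h1
        subst h1
        exact ncard_lt_of_pair_subset hxy.ne.symm hvm (supp_closed c hvm hadj2.symm)
    · have hd : 1 ≤ degN (G.deleteEdges C) v := by
        rw [hC]
        have h1 := deg_del_cross_ge (G := G) hvX
        have h2 := deg_split G v X
        have h3 := inter_ncard_le G v X
        have h4 := hdeg v
        omega
      have := supp_ncard_ge_deg c hvm
      omega

private lemma isolate_triple {G : SimpleGraph V} {a b c : V} (hdeg : ∀ v, 5 ≤ degN G v)
    (hab : G.Adj a b) (hac : G.Adj a c) (hbc : G.Adj b c) :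
    IsExtraEdgeCut G 2 (crossSet G {a, b, c}) := by
  set X : Set V := {a, b, c} with hX
  set C := crossSet G X with hC
  have haX : a ∈ X := by simp [hX]
  have hbX : b ∈ X := by simp [hX]
  have hcX : c ∈ X := by simp [hX]
  have hXcard : X.ncard ≤ 3 := by
    rw [hX]
    exact (Set.ncard_insert_le _ _).trans (by
      have := Set.ncard_insert_le b ({c} : Set V)
      simp only [Set.ncard_singleton] at this ⊢
      omega)
  have hab2 : (G.deleteEdges C).Adj a b :=
    SimpleGraph.deleteEdges_adj.mpr ⟨hab, not_mem_crossSet_of_both haX hbX⟩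
  have hac2 : (G.deleteEdges C).Adj a c :=
    SimpleGraph.deleteEdges_adj.mpr ⟨hac, not_mem_crossSet_of_both haX hcX⟩
  have hsupp : ((G.deleteEdges C).connectedComponentMk a).supp ⊆ X :=
    supp_subset_closed closed_del_cross haX
  have houta : 1 ≤ (G.neighborSet a \ X).ncard := by
    have := deg_split G a X
    have h2 := inter_ncard_le G a X
    have h3 := hdeg a
    omega
  obtain ⟨w, hwN, hwX⟩ :=
    Set.nonempty_of_ncard_ne_zero (s := G.neighborSet a \ X) (by omega)
  refine ⟨crossSet_subset_edgeSet G X, ?_, ?_⟩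
  · intro hcon
    have hreach : (G.deleteEdges C).Reachable w a := hcon.preconnected w a
    have : w ∈ ((G.deleteEdges C).connectedComponentMk a).supp := by
      rw [SimpleGraph.ConnectedComponent.mem_supp_iff]
      exact SimpleGraph.ConnectedComponent.eq.mpr hreach
    exact hwX (hsupp this)
  · intro co
    obtain ⟨v, hv⟩ := co.exists_rep
    have hvm : v ∈ co.supp := by
      rw [SimpleGraph.ConnectedComponent.mem_supp_iff]; exact hv
    by_cases hvX : v ∈ X
    · have hsub : X ⊆ co.supp := by
        have hamem : a ∈ co.supp := by
          simp only [hX, Set.mem_insert_iff, Set.mem_singleton_iff] at hvX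
          rcases hvX with h1 | h1 | h1
          · subst h1; exact hvm
          · subst h1; exact supp_closed co hvm hab2.symm
          · subst h1; exact supp_closed co hvm hac2.symm
        intro z hz
        simp only [hX, Set.mem_insert_iff, Set.mem_singleton_iff] at hz
        rcases hz with h1 | h1 | h1
        · subst h1; exact hamem
        · subst h1; exact supp_closed co hamem hab2
        · subst h1; exact supp_closed co hamem hac2
      have h3 : ({a, b, c} : Set V).ncard = 3 := ncard_triple hab.ne hac.ne hbc.ne
      have := Set.ncard_le_ncard hsub (Set.toFinite _)
      rw [← hX] at h3
      omega
    · have hd : 2 ≤ degN (G.deleteEdges C) v := by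
        rw [hC]
        have h1 := deg_del_cross_ge (G := G) hvX
        have h2 := deg_split G v X
        have h3 := inter_ncard_le G v X
        have h4 := hdeg v
        omega
      have := supp_ncard_ge_deg co hvm
      omega

end Cut


section Deg

variable {V : Type*} [Fintype V]

set_option linter.unusedSectionVars false

private lemma degN_deleteEdges_le (G : SimpleGraph V) (F : Set (Sym2 V)) (v : V) :
    degN (G.deleteEdges F) v ≤ degN G v :=
  Set.ncard_le_ncard (fun _ hz => (SimpleGraph.deleteEdges_adj.mp hz).1) (Set.toFinite _)

private lemma degN_deleteEdges_ge (G : SimpleGraph V) (F : Set (Sym2 V)) (v : V) :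
    degN G v ≤ degN (G.deleteEdges F) v + F.ncard := by
  have hsub : (G.deleteEdges F).neighborSet v ⊆ G.neighborSet v :=
    fun _ hz => (SimpleGraph.deleteEdges_adj.mp hz).1
  have hpart := ncard_inter_diff (G.neighborSet v) ((G.deleteEdges F).neighborSet v)
  rw [Set.inter_eq_self_of_subset_right hsub] at hpart
  have hdiff : (G.neighborSet v \ (G.deleteEdges F).neighborSet v).ncard ≤ F.ncard := by
    apply Set.ncard_le_ncard_of_injOn (fun z => s(v, z))
    · rintro z ⟨hz1, hz2⟩
      by_contra hzF
      exact hz2 (SimpleGraph.deleteEdges_adj.mpr ⟨hz1, hzF⟩)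
    · intro z1 _ z2 _ he
      rcases Sym2.eq_iff.mp he with ⟨_, h2⟩ | ⟨h1, h2⟩
      · exact h2
      · rw [h2, ← h1]
  unfold degN at *
  omega

private lemma degN_deleteEdges_lt {G : SimpleGraph V} {F : Set (Sym2 V)} {v w : V}
    (hF : s(v, w) ∈ F) (hadj : G.Adj v w) :
    degN (G.deleteEdges F) v + 1 ≤ degN G v := by
  have hsub : (G.deleteEdges F).neighborSet v ⊆ G.neighborSet v \ {w} := by
    intro z hz
    obtain ⟨hz1, hz2⟩ := SimpleGraph.deleteEdges_adj.mp hz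
    refine ⟨hz1, ?_⟩
    intro hzw
    rw [Set.mem_singleton_iff] at hzw
    subst hzw
    exact hz2 hF
  have h1 : degN (G.deleteEdges F) v ≤ (G.neighborSet v \ {w}).ncard :=
    Set.ncard_le_ncard hsub (Set.toFinite _)
  have h2 : (G.neighborSet v \ {w}).ncard = degN G v - 1 :=
    Set.ncard_diff_singleton_of_mem hadj
  have h3 : 0 < degN G v := (Set.ncard_pos (Set.toFinite _)).mpr ⟨w, hadj⟩
  omega

private lemma triple_lb {G : SimpleGraph V} {k : ℕ} (hreg : ∀ v, degN G v = k) :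
    ∀ X : Set V, X.ncard = 3 → 3 * k ≤ dOut G X + 6 := by
  intro X h3
  obtain ⟨a, b, c, hab, hac, hbc, rfl⟩ := Set.ncard_eq_three.mp h3
  rw [dOut_triple hab hac hbc]
  have key : ∀ x : V, x ∈ ({a, b, c} : Set V) →
      ∃ y z : V, y ≠ z ∧ G.neighborSet x ∩ {a, b, c} ⊆ {y, z} := by
    intro x hx
    simp only [Set.mem_insert_iff, Set.mem_singleton_iff] at hx
    rcases hx with rfl | rfl | rfl
    · refine ⟨b, c, hbc, ?_⟩
      rintro z ⟨hz1, hz2⟩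
      simp only [Set.mem_insert_iff, Set.mem_singleton_iff] at hz2 ⊢
      rcases hz2 with rfl | h | h
      · exact absurd hz1 (by simp)
      · exact Or.inl h
      · exact Or.inr h
    · refine ⟨a, c, hac, ?_⟩
      rintro z ⟨hz1, hz2⟩
      simp only [Set.mem_insert_iff, Set.mem_singleton_iff] at hz2 ⊢
      rcases hz2 with h | rfl | h
      · exact Or.inl h
      · exact absurd hz1 (by simp)
      · exact Or.inr h
    · refine ⟨a, b, hab, ?_⟩
      rintro z ⟨hz1, hz2⟩
      simp only [Set.mem_insert_iff, Set.mem_singleton_iff] at hz2 ⊢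
      rcases hz2 with h | h | rfl
      · exact Or.inl h
      · exact Or.inr h
      · exact absurd hz1 (by simp)
  have bound : ∀ x : V, x ∈ ({a, b, c} : Set V) →
      (G.neighborSet x ∩ {a, b, c}).ncard ≤ 2 := by
    intro x hx
    obtain ⟨y, z, hyz, hsub⟩ := key x hx
    calc (G.neighborSet x ∩ {a, b, c}).ncard ≤ ({y, z} : Set V).ncard :=
          Set.ncard_le_ncard hsub (Set.toFinite _)
      _ = 2 := ncard_pair hyz
  have da := deg_split G a ({a, b, c} : Set V)
  have db := deg_split G b ({a, b, c} : Set V)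
  have dc := deg_split G c ({a, b, c} : Set V)
  have ba := bound a (by simp)
  have bb := bound b (by simp)
  have bc' := bound c (by simp)
  have ra := hreg a; have rb := hreg b; have rc := hreg c
  omega

private lemma struct3 {G : SimpleGraph V} {k : ℕ} (hreg : ∀ v, degN G v = k)
    {Fu : Set (Sym2 V)} (cp : (G.deleteEdges Fu).ConnectedComponent)
    (h3 : cp.supp.ncard = 3) (hle : Fu.ncard + 6 ≤ 3 * k) :
    ∃ a b c : V, a ≠ b ∧ a ≠ c ∧ b ≠ c ∧ cp.supp = {a, b, c} ∧
      G.Adj a b ∧ G.Adj a c ∧ G.Adj b c ∧ crossSet G cp.supp = Fu ∧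
      Fu.ncard + 6 = 3 * k := by
  obtain ⟨a, b, c, hab, hac, hbc, hX⟩ := Set.ncard_eq_three.mp h3
  have hcross := crossSet_supp_subset cp
  have hcard : (crossSet G cp.supp).ncard ≤ Fu.ncard :=
    Set.ncard_le_ncard hcross (Set.toFinite _)
  have hlb := triple_lb hreg cp.supp h3
  rw [dOut_eq_crossSet] at hlb
  -- all equalities
  have heq : (crossSet G cp.supp).ncard = Fu.ncard ∧ Fu.ncard + 6 = 3 * k := by
    constructor <;> omega
  have hcreq : crossSet G cp.supp = Fu :=
    Set.eq_of_subset_of_ncard_le hcross (by omega) (Set.toFinite _)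
  -- now the adjacency: each vertex has exactly 2 neighbours inside
  have hdo : dOut G cp.supp + 6 = 3 * k := by
    rw [dOut_eq_crossSet, hcreq]; omega
  rw [hX] at hdo
  rw [dOut_triple hab hac hbc] at hdo
  have da := deg_split G a ({a, b, c} : Set V)
  have db := deg_split G b ({a, b, c} : Set V)
  have dc := deg_split G c ({a, b, c} : Set V)
  have ra := hreg a; have rb := hreg b; have rc := hreg c
  -- subsets
  have hsub_a : G.neighborSet a ∩ {a, b, c} ⊆ ({b, c} : Set V) := by
    rintro z ⟨hz1, hz2⟩
    simp only [Set.mem_insert_iff, Set.mem_singleton_iff] at hz2 ⊢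
    rcases hz2 with rfl | h | h
    · exact absurd hz1 (by simp)
    · exact Or.inl h
    · exact Or.inr h
  have hsub_b : G.neighborSet b ∩ {a, b, c} ⊆ ({a, c} : Set V) := by
    rintro z ⟨hz1, hz2⟩
    simp only [Set.mem_insert_iff, Set.mem_singleton_iff] at hz2 ⊢
    rcases hz2 with h | rfl | h
    · exact Or.inl h
    · exact absurd hz1 (by simp)
    · exact Or.inr h
  have hsub_c : G.neighborSet c ∩ {a, b, c} ⊆ ({a, b} : Set V) := by
    rintro z ⟨hz1, hz2⟩
    simp only [Set.mem_insert_iff, Set.mem_singleton_iff] at hz2 ⊢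
    rcases hz2 with h | h | rfl
    · exact Or.inl h
    · exact Or.inr h
    · exact absurd hz1 (by simp)
  have bnd_a : (G.neighborSet a ∩ {a, b, c}).ncard ≤ 2 :=
    (Set.ncard_le_ncard hsub_a (Set.toFinite _)).trans (by rw [ncard_pair hbc])
  have bnd_b : (G.neighborSet b ∩ {a, b, c}).ncard ≤ 2 :=
    (Set.ncard_le_ncard hsub_b (Set.toFinite _)).trans (by rw [ncard_pair hac])
  have bnd_c : (G.neighborSet c ∩ {a, b, c}).ncard ≤ 2 :=
    (Set.ncard_le_ncard hsub_c (Set.toFinite _)).trans (by rw [ncard_pair hab])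
  have ea : (G.neighborSet a ∩ {a, b, c}).ncard = 2 := by omega
  have eb : (G.neighborSet b ∩ {a, b, c}).ncard = 2 := by omega
  have ec : (G.neighborSet c ∩ {a, b, c}).ncard = 2 := by omega
  have hNa : G.neighborSet a ∩ {a, b, c} = {b, c} :=
    Set.eq_of_subset_of_ncard_le hsub_a (by rw [ncard_pair hbc, ea]) (Set.toFinite _)
  have hNc : G.neighborSet c ∩ {a, b, c} = {a, b} :=
    Set.eq_of_subset_of_ncard_le hsub_c (by rw [ncard_pair hab, ec]) (Set.toFinite _)
  have hAab : G.Adj a b := by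
    have : b ∈ G.neighborSet a ∩ {a, b, c} := by rw [hNa]; simp
    exact this.1
  have hAac : G.Adj a c := by
    have : c ∈ G.neighborSet a ∩ {a, b, c} := by rw [hNa]; simp
    exact this.1
  have hAbc : G.Adj b c := by
    have : b ∈ G.neighborSet c ∩ {a, b, c} := by rw [hNc]; simp
    exact (this.1).symm
  exact ⟨a, b, c, hab, hac, hbc, hX, hAab, hAac, hAbc, hcreq, heq.2⟩

end Deg


section Master

variable {V : Type*} [Fintype V]

set_option linter.unusedSectionVars false

private lemma master1 (G : SimpleGraph V) (k : ℕ)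
    (hreg : ∀ v, degN G v = k) (hs : SuperLambda G 2) (hk : 5 ≤ k)
    (F : Set (Sym2 V)) (hFE : F ⊆ G.edgeSet) (hFc : F.ncard + 3 ≤ k) :
    SuperLambda (G.deleteEdges F) 1 := by
  classical
  set G' := G.deleteEdges F with hG'
  -- ξ₂(G) and λ''(G) lower bounds
  have hlamset2_ne : {n | ∃ Fc, IsExtraEdgeCut G 2 Fc ∧ Fc.ncard = n}.Nonempty := by
    obtain ⟨F2, hF2⟩ := hs.2.1
    exact ⟨F2.ncard, F2, hF2, rfl⟩
  obtain ⟨F0, hF0cut, hF0c⟩ := Nat.sInf_mem hlamset2_ne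
  obtain ⟨cp0, hcp0⟩ := hs.2.2.2 F0 hF0cut hF0c
  have hxm : xiH G 2 ∈ {n | ∃ X : Set V, X.ncard = 2 + 1 ∧ (G.induce X).Connected ∧
      dOut G X = n} := by
    apply Nat.sInf_mem
    exact ⟨dOut G cp0.supp, cp0.supp, hcp0,
      induce_connected_mono (SimpleGraph.deleteEdges_le _) _ (induce_supp_connected cp0), rfl⟩
  obtain ⟨X2, hX2c, _, hX2d⟩ := hxm
  have xi2ge : 3 * k ≤ xiH G 2 + 6 := by
    rw [← hX2d]; exact triple_lb hreg X2 (by omega)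
  have hlam2ge : ∀ Fu, IsExtraEdgeCut G 2 Fu → 3 * k ≤ Fu.ncard + 6 := by
    intro Fu hFu
    have h1 : lambdaH G 2 ≤ Fu.ncard := Nat.sInf_le ⟨Fu, hFu, rfl⟩
    have h2 := hs.2.2.1
    omega
  -- degree bounds in G'
  have hdegub : ∀ v, degN G' v ≤ k := fun v => (hreg v) ▸ degN_deleteEdges_le G F v
  have hdeglb : ∀ v, k ≤ degN G' v + F.ncard := fun v => (hreg v) ▸ degN_deleteEdges_ge G F v
  have hdeg3 : ∀ v, 3 ≤ degN G' v := by
    intro v; have h1 := hdeglb v; omega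
  have hnbr : ∀ v, ∃ w, G'.Adj v w := by
    intro v
    have h1 := hdeg3 v
    obtain ⟨w, hw⟩ := Set.nonempty_of_ncard_ne_zero (s := G'.neighborSet v)
      (by unfold degN at h1; omega)
    exact ⟨w, hw⟩
  -- ξ(G') upper bounds
  have hximem : ∀ x y : V, G'.Adj x y → xiH G' 1 ≤ dOut G' {x, y} := by
    intro x y h
    exact Nat.sInf_le ⟨{x, y}, by rw [ncard_pair h.ne], adj_pair_conn h, rfl⟩
  have hxiub : ∀ x y : V, G'.Adj x y → xiH G' 1 + 2 ≤ degN G' x + degN G' y := by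
    intro x y h
    have h1 := hximem x y h
    have h2 := dOut_pair h
    omega
  have hxi2k : xiH G' 1 + 2 ≤ 2 * k := by
    obtain ⟨v⟩ := hs.1.nonempty
    obtain ⟨w, hw⟩ := hnbr v
    have := hxiub v w hw
    have := hdegub v
    have := hdegub w
    omega
  have hxiF : F.Nonempty → xiH G' 1 + 3 ≤ 2 * k := by
    rintro ⟨e, he⟩
    obtain ⟨x, y, rfl⟩ : ∃ x y : V, e = s(x, y) := Sym2.ind (fun x y => ⟨x, y, rfl⟩) e
    have hadj : G.Adj x y := (G.mem_edgeSet).mp (hFE he)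
    have hdx : degN G' x + 1 ≤ k := by
      rw [← hreg x]; exact degN_deleteEdges_lt he hadj
    obtain ⟨w, hw⟩ := hnbr x
    have := hxiub x w hw
    have := hdegub w
    omega
  -- λ'(G') ≤ ξ(G')
  have hxiset_ne : {n | ∃ X : Set V, X.ncard = 1 + 1 ∧ (G'.induce X).Connected ∧
      dOut G' X = n}.Nonempty := by
    obtain ⟨v⟩ := hs.1.nonempty
    obtain ⟨w, hw⟩ := hnbr v
    exact ⟨dOut G' {v, w}, {v, w}, by rw [ncard_pair hw.ne], adj_pair_conn hw, rfl⟩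
  have hlam_le_xi : lambdaH G' 1 ≤ xiH G' 1 := by
    have hmem : xiH G' 1 ∈ {n | ∃ X : Set V, X.ncard = 1 + 1 ∧ (G'.induce X).Connected ∧
        dOut G' X = n} := Nat.sInf_mem hxiset_ne
    obtain ⟨X0, hX0c, hX0conn, hX0d⟩ := hmem
    obtain ⟨x, y, hne, rfl⟩ := Set.ncard_eq_two.mp (by omega : X0.ncard = 2)
    have hadj : G'.Adj x y := pair_conn_adj hne hX0conn
    have hcut := isolate_pair hdeg3 hadj
    have h1 : lambdaH G' 1 ≤ (crossSet G' {x, y}).ncard := Nat.sInf_le ⟨_, hcut, rfl⟩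
    rw [← dOut_eq_crossSet] at h1
    omega
  have hlamset_ne : {n | ∃ Fc, IsExtraEdgeCut G' 1 Fc ∧ Fc.ncard = n}.Nonempty := by
    obtain ⟨v⟩ := hs.1.nonempty
    obtain ⟨w, hw⟩ := hnbr v
    exact ⟨_, _, isolate_pair hdeg3 hw, rfl⟩
  -- THE KEY step
  have KEY : ∀ Fm, IsExtraEdgeCut G' 1 Fm → Fm.ncard = lambdaH G' 1 →
      ∃ c : (G'.deleteEdges Fm).ConnectedComponent, c.supp.ncard = 2 := by
    intro Fm hFm hFmc
    by_contra hno
    push_neg at hno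
    have hall : ∀ c : (G'.deleteEdges Fm).ConnectedComponent, 2 < c.supp.ncard := by
      intro c
      have h1 := hFm.2.2 c
      have h2 := hno c
      omega
    have hun : G.deleteEdges (F ∪ Fm) = G'.deleteEdges Fm := by
      rw [hG', SimpleGraph.deleteEdges_deleteEdges]
    have hFmE : Fm ⊆ G.edgeSet \ F := by
      have h1 := hFm.1
      rwa [hG', SimpleGraph.edgeSet_deleteEdges] at h1
    have hdisj : Disjoint F Fm := Set.disjoint_right.mpr fun e he => (hFmE he).2
    have hcut2 : IsExtraEdgeCut G 2 (F ∪ Fm) := by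
      refine ⟨Set.union_subset hFE (fun e he => (hFmE he).1), ?_, ?_⟩
      · rw [hun]; exact hFm.2.1
      · rw [hun]; exact hall
    have hsz : (F ∪ Fm).ncard = F.ncard + Fm.ncard :=
      Set.ncard_union_eq hdisj (Set.toFinite _) (Set.toFinite _)
    have h36 := hlam2ge (F ∪ Fm) hcut2
    have hFmxi : Fm.ncard ≤ xiH G' 1 := by rw [hFmc]; exact hlam_le_xi
    rcases Nat.eq_zero_or_pos F.ncard with ht0 | htpos
    · omega
    have hxiF' := hxiF (Set.nonempty_of_ncard_ne_zero (by omega))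
    have htk : F.ncard + 3 = k ∧ Fm.ncard + 3 = 2 * k := by omega
    -- the union is a minimum 2-extra edge-cut
    have hlam2le : lambdaH G 2 ≤ (F ∪ Fm).ncard := Nat.sInf_le ⟨_, hcut2, rfl⟩
    have hl2 := hs.2.2.1
    have hlam2eq : (F ∪ Fm).ncard = lambdaH G 2 := by omega
    obtain ⟨cp, hcp⟩ := hs.2.2.2 (F ∪ Fm) hcut2 hlam2eq
    obtain ⟨a, b, c, hab, hac, hbc, hsupp, hAab, hAac, hAbc, hcrX, hsize⟩ :=
      struct3 hreg cp (by omega) (by omega)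
    have hFsub : F ⊆ crossSet G cp.supp := by rw [hcrX]; exact Set.subset_union_left
    have haX : a ∈ cp.supp := by rw [hsupp]; simp
    have hbX : b ∈ cp.supp := by rw [hsupp]; simp
    have hcX : c ∈ cp.supp := by rw [hsupp]; simp
    have hGab : G'.Adj a b := by
      rw [hG', SimpleGraph.deleteEdges_adj]
      exact ⟨hAab, fun hmem => not_mem_crossSet_of_both haX hbX (hFsub hmem)⟩
    have hGac : G'.Adj a c := by
      rw [hG', SimpleGraph.deleteEdges_adj]
      exact ⟨hAac, fun hmem => not_mem_crossSet_of_both haX hcX (hFsub hmem)⟩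
    have hGbc : G'.Adj b c := by
      rw [hG', SimpleGraph.deleteEdges_adj]
      exact ⟨hAbc, fun hmem => not_mem_crossSet_of_both hbX hcX (hFsub hmem)⟩
    -- cross in G' is exactly Fm
    have hFmdiff : Fm \ F = Fm := by
      ext e
      constructor
      · exact fun h => h.1
      · exact fun he => ⟨he, fun hf => (hFmE he).2 hf⟩
    have hcr' : crossSet G' cp.supp = Fm := by
      rw [hG', crossSet_deleteEdges, hcrX, Set.union_diff_left, hFmdiff]
    have hdOutX : dOut G' cp.supp = Fm.ncard := by
      rw [dOut_eq_crossSet, hcr']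
    rw [hsupp] at hdOutX
    have htrip := dOut_triple (G := G') hab hac hbc
    -- neighbour intersections inside the triangle, in G'
    have hNa' : G'.neighborSet a ∩ {a, b, c} = {b, c} := by
      ext z
      constructor
      · rintro ⟨hz1, hz2⟩
        simp only [Set.mem_insert_iff, Set.mem_singleton_iff] at hz2 ⊢
        rcases hz2 with rfl | h | h
        · exact absurd hz1 (by simp)
        · exact Or.inl h
        · exact Or.inr h
      · intro hz
        simp only [Set.mem_insert_iff, Set.mem_singleton_iff] at hz
        rcases hz with rfl | rfl
        · exact ⟨hGab, by simp⟩
        · exact ⟨hGac, by simp⟩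
    have hNb' : G'.neighborSet b ∩ {a, b, c} = {a, c} := by
      ext z
      constructor
      · rintro ⟨hz1, hz2⟩
        simp only [Set.mem_insert_iff, Set.mem_singleton_iff] at hz2 ⊢
        rcases hz2 with h | rfl | h
        · exact Or.inl h
        · exact absurd hz1 (by simp)
        · exact Or.inr h
      · intro hz
        simp only [Set.mem_insert_iff, Set.mem_singleton_iff] at hz
        rcases hz with rfl | rfl
        · exact ⟨hGab.symm, by simp⟩
        · exact ⟨hGbc, by simp⟩
    have hNc' : G'.neighborSet c ∩ {a, b, c} = {a, b} := by
      ext z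
      constructor
      · rintro ⟨hz1, hz2⟩
        simp only [Set.mem_insert_iff, Set.mem_singleton_iff] at hz2 ⊢
        rcases hz2 with h | h | rfl
        · exact Or.inl h
        · exact Or.inr h
        · exact absurd hz1 (by simp)
      · intro hz
        simp only [Set.mem_insert_iff, Set.mem_singleton_iff] at hz
        rcases hz with rfl | rfl
        · exact ⟨hGac.symm, by simp⟩
        · exact ⟨hGbc.symm, by simp⟩
    have s_a : degN G' a = 2 + (G'.neighborSet a \ {a, b, c}).ncard := by
      rw [deg_split G' a ({a, b, c} : Set V), hNa', ncard_pair hbc]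
    have s_b : degN G' b = 2 + (G'.neighborSet b \ {a, b, c}).ncard := by
      rw [deg_split G' b ({a, b, c} : Set V), hNb', ncard_pair hac]
    have s_c : degN G' c = 2 + (G'.neighborSet c \ {a, b, c}).ncard := by
      rw [deg_split G' c ({a, b, c} : Set V), hNc', ncard_pair hab]
    have hsum : degN G' a + degN G' b + degN G' c = 2 * k + 3 := by omega
    have inner : ∀ u v w : V, G'.Adj u v →
        degN G' u + degN G' v + degN G' w = 2 * k + 3 → 5 ≤ degN G' w → False := by
      intro u v w huv hsm h5
      have hcut := isolate_pair hdeg3 huv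
      have hdo := dOut_pair huv
      have hle : lambdaH G' 1 ≤ (crossSet G' {u, v}).ncard := Nat.sInf_le ⟨_, hcut, rfl⟩
      rw [← dOut_eq_crossSet] at hle
      omega
    by_cases h5a : 5 ≤ degN G' a
    · exact inner b c a hGbc (by omega) h5a
    by_cases h5b : 5 ≤ degN G' b
    · exact inner a c b hGac (by omega) h5b
    by_cases h5c : 5 ≤ degN G' c
    · exact inner a b c hGab (by omega) h5c
    omega
  -- λ'(G') ≥ ξ(G')
  have hlam_ge_xi : xiH G' 1 ≤ lambdaH G' 1 := by
    have hmem : lambdaH G' 1 ∈ {n | ∃ Fc, IsExtraEdgeCut G' 1 Fc ∧ Fc.ncard = n} :=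
      Nat.sInf_mem hlamset_ne
    obtain ⟨Fm, hFm, hFmc⟩ := hmem
    obtain ⟨c2, hc2⟩ := KEY Fm hFm hFmc
    obtain ⟨x, y, hne, hsupp2, hadj⟩ := supp_pair c2 hc2
    have hadj' : G'.Adj x y := (SimpleGraph.deleteEdges_adj.mp hadj).1
    have hsub : crossSet G' {x, y} ⊆ Fm := by
      rw [← hsupp2]; exact crossSet_supp_subset c2
    have h1 : dOut G' {x, y} ≤ Fm.ncard := by
      rw [dOut_eq_crossSet]; exact Set.ncard_le_ncard hsub (Set.toFinite _)
    have h2 := hximem x y hadj'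
    omega
  -- G' is connected
  have hconn' : G'.Connected := by
    by_contra hnc
    by_cases hall : ∀ c : G'.ConnectedComponent, 2 < c.supp.ncard
    · have hcut : IsExtraEdgeCut G 2 F := ⟨hFE, hnc, hall⟩
      have := hlam2ge F hcut
      omega
    · push_neg at hall
      obtain ⟨c, hc⟩ := hall
      obtain ⟨v, hv⟩ := c.exists_rep
      have hvm : v ∈ c.supp := by
        rw [SimpleGraph.ConnectedComponent.mem_supp_iff]; exact hv
      have hpos : 0 < c.supp.ncard := (Set.ncard_pos (Set.toFinite _)).mpr ⟨v, hvm⟩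
      have hcrsub : crossSet G c.supp ⊆ F := crossSet_supp_subset c
      have hcrle : (crossSet G c.supp).ncard ≤ F.ncard :=
        Set.ncard_le_ncard hcrsub (Set.toFinite _)
      have hdple : dOut G c.supp ≤ F.ncard := by
        rw [dOut_eq_crossSet]; exact hcrle
      rcases (by omega : c.supp.ncard = 1 ∨ c.supp.ncard = 2) with h1 | h2
      · obtain ⟨w, hw⟩ := Set.ncard_eq_one.mp h1
        have hde : dOut G c.supp = k := by rw [hw, dOut_singleton, hreg]
        omega
      · obtain ⟨x, y, hne, hsupp2, hadj⟩ := supp_pair c h2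
        have hadjG : G.Adj x y := (SimpleGraph.deleteEdges_adj.mp hadj).1
        have hdo := dOut_pair hadjG
        have hdx := hreg x
        have hdy := hreg y
        rw [hsupp2] at hdple
        omega
  refine ⟨hconn', ?_, le_antisymm hlam_le_xi hlam_ge_xi, KEY⟩
  obtain ⟨v⟩ := hs.1.nonempty
  obtain ⟨w, hw⟩ := hnbr v
  exact ⟨_, isolate_pair hdeg3 hw⟩

end Master


section Master2

variable {V : Type*} [Fintype V]

set_option linter.unusedSectionVars false

private lemma master2 (G : SimpleGraph V)
    (hreg : ∀ v, degN G v = 5) (hs : SuperLambda G 2) (hg : G.egirth = 3) :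
    ∃ F3 : Set (Sym2 V), F3 ⊆ G.edgeSet ∧ F3.ncard = 3 ∧
      ¬ SuperLambda (G.deleteEdges F3) 1 := by
  classical
  -- a triangle from the girth hypothesis
  obtain ⟨a0, b0, c0, h0ab, h0ac, h0bc, hA0ab, hA0bc, hA0ca⟩ :
      ∃ a b c : V, a ≠ b ∧ a ≠ c ∧ b ≠ c ∧ G.Adj a b ∧ G.Adj b c ∧ G.Adj c a := by
    have hac : ¬ G.IsAcyclic := by
      rw [← SimpleGraph.egirth_eq_top, hg]; simp
    obtain ⟨a, w, hc, hl⟩ := (SimpleGraph.exists_egirth_eq_length (G := G)).mpr hac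
    rw [hg] at hl
    have hl3 : w.length = 3 := by exact_mod_cast hl.symm
    match w, hl3 with
    | SimpleGraph.Walk.cons h1 (SimpleGraph.Walk.cons h2 (SimpleGraph.Walk.cons h3
        SimpleGraph.Walk.nil)), _ =>
      exact ⟨_, _, _, h1.ne, h3.ne.symm, h2.ne, h1, h2, h3⟩
  have hA0ac : G.Adj a0 c0 := hA0ca.symm
  have hdeg5 : ∀ v, 5 ≤ degN G v := fun v => (hreg v).ge
  -- λ''(G) ≤ 9
  have hcutT := isolate_triple hdeg5 hA0ab hA0ac hA0bc
  have hT9 : dOut G {a0, b0, c0} ≤ 9 := by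
    rw [dOut_triple h0ab h0ac h0bc]
    have ba : 2 ≤ (G.neighborSet a0 ∩ {a0, b0, c0}).ncard := by
      rw [← ncard_pair h0bc]
      refine Set.ncard_le_ncard ?_ (Set.toFinite _)
      rintro z (rfl | rfl)
      · exact ⟨hA0ab, by simp⟩
      · exact ⟨hA0ac, by simp⟩
    have bb : 2 ≤ (G.neighborSet b0 ∩ {a0, b0, c0}).ncard := by
      rw [← ncard_pair h0ac]
      refine Set.ncard_le_ncard ?_ (Set.toFinite _)
      rintro z (rfl | rfl)
      · exact ⟨hA0ab.symm, by simp⟩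
      · exact ⟨hA0bc, by simp⟩
    have bc' : 2 ≤ (G.neighborSet c0 ∩ {a0, b0, c0}).ncard := by
      rw [← ncard_pair h0ab]
      refine Set.ncard_le_ncard ?_ (Set.toFinite _)
      rintro z (rfl | rfl)
      · exact ⟨hA0ac.symm, by simp⟩
      · exact ⟨hA0bc.symm, by simp⟩
    have da := deg_split G a0 ({a0, b0, c0} : Set V)
    have db := deg_split G b0 ({a0, b0, c0} : Set V)
    have dc := deg_split G c0 ({a0, b0, c0} : Set V)
    have ra := hreg a0; have rb := hreg b0; have rc := hreg c0
    omega
  have hlam2le : lambdaH G 2 ≤ 9 := by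
    have h1 : lambdaH G 2 ≤ (crossSet G {a0, b0, c0}).ncard := Nat.sInf_le ⟨_, hcutT, rfl⟩
    rw [← dOut_eq_crossSet] at h1
    omega
  -- λ''(G) ≥ 9  (= ξ₂ ≥ 9)
  have hlamset2_ne : {n | ∃ Fc, IsExtraEdgeCut G 2 Fc ∧ Fc.ncard = n}.Nonempty :=
    ⟨_, _, hcutT, rfl⟩
  have hmem2 : lambdaH G 2 ∈ {n | ∃ Fc, IsExtraEdgeCut G 2 Fc ∧ Fc.ncard = n} :=
    Nat.sInf_mem hlamset2_ne
  obtain ⟨F0, hF0cut, hF0c⟩ := hmem2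
  obtain ⟨cp0, hcp0⟩ := hs.2.2.2 F0 hF0cut hF0c
  have hxm : xiH G 2 ∈ {n | ∃ X : Set V, X.ncard = 2 + 1 ∧ (G.induce X).Connected ∧
      dOut G X = n} := by
    apply Nat.sInf_mem
    exact ⟨dOut G cp0.supp, cp0.supp, hcp0,
      induce_connected_mono (SimpleGraph.deleteEdges_le _) _ (induce_supp_connected cp0), rfl⟩
  obtain ⟨X2, hX2c, _, hX2d⟩ := hxm
  have xi2ge : 15 ≤ xiH G 2 + 6 := by
    rw [← hX2d]
    exact triple_lb hreg X2 (by omega)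
  have hl2 := hs.2.2.1
  have hF0card : F0.ncard = 9 := by omega
  -- the structure of the minimum cut
  obtain ⟨a, b, c, hab, hac, hbc, hsupp, hAab, hAac, hAbc, hcrX, _⟩ :=
    struct3 hreg cp0 (by omega) (by omega)
  set X : Set V := cp0.supp with hXdef
  have haX : a ∈ X := by rw [hsupp]; simp
  have hbX : b ∈ X := by rw [hsupp]; simp
  have hcX : c ∈ X := by rw [hsupp]; simp
  -- each triangle vertex has exactly 3 outside neighbours
  have hout3 : ∀ x y z : V, X = {x, y, z} → G.Adj x y → G.Adj x z → y ≠ z →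
      3 ≤ (G.neighborSet x \ X).ncard := by
    intro x y z hXeq hxy hxz hyz
    have hin : 2 ≤ (G.neighborSet x ∩ X).ncard := by
      rw [← ncard_pair hyz]
      refine Set.ncard_le_ncard ?_ (Set.toFinite _)
      rintro u (rfl | rfl)
      · exact ⟨hxy, by rw [hXeq]; simp⟩
      · exact ⟨hxz, by rw [hXeq]; simp⟩
    have hin3 : (G.neighborSet x ∩ X).ncard ≤ X.ncard := inter_ncard_le G x X
    have hX3 : X.ncard = 3 := by rw [hXeq]; exact ncard_triple (hxy.ne) (hxz.ne) hyz
    have hd := deg_split G x X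
    have hr := hreg x
    have hsubx : G.neighborSet x ∩ X ⊆ X \ {x} := by
      rintro u ⟨hu1, hu2⟩
      exact ⟨hu2, fun h => by rw [Set.mem_singleton_iff] at h; subst h; exact G.irrefl hu1⟩
    have hXx : (X \ {x}).ncard = 2 := by
      rw [Set.ncard_diff_singleton_of_mem (by rw [hXeq]; simp), hX3]
    have hin2 : (G.neighborSet x ∩ X).ncard ≤ 2 := by
      rw [← hXx]; exact Set.ncard_le_ncard hsubx (Set.toFinite _)
    omega
  have hout_a : 3 ≤ (G.neighborSet a \ X).ncard := hout3 a b c hsupp hAab hAac hbc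
  have hout_b : 3 ≤ (G.neighborSet b \ X).ncard := by
    refine hout3 b a c ?_ hAab.symm hAbc hac
    rw [hsupp]; ext u; simp; tauto
  have hout_c : 3 ≤ (G.neighborSet c \ X).ncard := by
    refine hout3 c a b ?_ hAac.symm hAbc.symm hab
    rw [hsupp]; ext u; simp; tauto
  -- choose distinct outside endpoints
  obtain ⟨za, hza⟩ := Set.nonempty_of_ncard_ne_zero
    (s := G.neighborSet a \ X) (by omega)
  have h2b : 2 ≤ ((G.neighborSet b \ X) \ {za}).ncard := by
    have h1 : (G.neighborSet b \ X) ⊆ insert za ((G.neighborSet b \ X) \ {za}) := by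
      intro u hu
      by_cases hu2 : u = za
      · rw [hu2]; exact Set.mem_insert _ _
      · exact Set.mem_insert_of_mem _ ⟨hu, hu2⟩
    have h2 := Set.ncard_le_ncard h1 (Set.toFinite _)
    have h3 := Set.ncard_insert_le za ((G.neighborSet b \ X) \ {za})
    omega
  obtain ⟨zb, hzb⟩ := Set.nonempty_of_ncard_ne_zero
    (s := (G.neighborSet b \ X) \ {za}) (by omega)
  have h2c : 1 ≤ (((G.neighborSet c \ X) \ {za}) \ {zb}).ncard := by
    have h1 : (G.neighborSet c \ X) ⊆
        insert za (insert zb (((G.neighborSet c \ X) \ {za}) \ {zb})) := by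
      intro u hu
      by_cases hu2 : u = za
      · rw [hu2]; exact Set.mem_insert _ _
      · by_cases hu3 : u = zb
        · rw [hu3]; exact Set.mem_insert_of_mem _ (Set.mem_insert _ _)
        · exact Set.mem_insert_of_mem _ (Set.mem_insert_of_mem _ ⟨⟨hu, hu2⟩, hu3⟩)
    have h2 := Set.ncard_le_ncard h1 (Set.toFinite _)
    have h3 := Set.ncard_insert_le za (insert zb (((G.neighborSet c \ X) \ {za}) \ {zb}))
    have h4 := Set.ncard_insert_le zb (((G.neighborSet c \ X) \ {za}) \ {zb})
    omega
  obtain ⟨zc, hzc⟩ := Set.nonempty_of_ncard_ne_zero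
    (s := ((G.neighborSet c \ X) \ {za}) \ {zb}) (by omega)
  have hAaza : G.Adj a za := hza.1
  have hzaX : za ∉ X := hza.2
  have hAbzb : G.Adj b zb := hzb.1.1
  have hzbX : zb ∉ X := hzb.1.2
  have hzbza : zb ≠ za := hzb.2
  have hAczc : G.Adj c zc := hzc.1.1.1
  have hzcX : zc ∉ X := hzc.1.1.2
  have hzcza : zc ≠ za := hzc.1.2
  have hzczb : zc ≠ zb := hzc.2
  -- inequalities between the six vertices
  have hzaa : za ≠ a := fun h => hzaX (h ▸ haX)
  have hzab : za ≠ b := fun h => hzaX (h ▸ hbX)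
  have hzac : za ≠ c := fun h => hzaX (h ▸ hcX)
  have hzba : zb ≠ a := fun h => hzbX (h ▸ haX)
  have hzbb : zb ≠ b := fun h => hzbX (h ▸ hbX)
  have hzbc : zb ≠ c := fun h => hzbX (h ▸ hcX)
  have hzca : zc ≠ a := fun h => hzcX (h ▸ haX)
  have hzcb : zc ≠ b := fun h => hzcX (h ▸ hbX)
  have hzcc : zc ≠ c := fun h => hzcX (h ▸ hcX)
  -- the three removed edges
  set F3 : Set (Sym2 V) := {s(a, za), s(b, zb), s(c, zc)} with hF3def
  have hF3sub : F3 ⊆ G.edgeSet := by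
    intro e he
    simp only [hF3def, Set.mem_insert_iff, Set.mem_singleton_iff] at he
    rcases he with rfl | rfl | rfl
    · exact (G.mem_edgeSet).mpr hAaza
    · exact (G.mem_edgeSet).mpr hAbzb
    · exact (G.mem_edgeSet).mpr hAczc
  have hne12 : s(a, za) ≠ s(b, zb) := by
    intro h
    rcases Sym2.eq_iff.mp h with ⟨h1, _⟩ | ⟨h1, _⟩
    · exact hab h1
    · exact hzba h1.symm
  have hne13 : s(a, za) ≠ s(c, zc) := by
    intro h
    rcases Sym2.eq_iff.mp h with ⟨h1, _⟩ | ⟨h1, _⟩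
    · exact hac h1
    · exact hzca h1.symm
  have hne23 : s(b, zb) ≠ s(c, zc) := by
    intro h
    rcases Sym2.eq_iff.mp h with ⟨h1, _⟩ | ⟨h1, _⟩
    · exact hbc h1
    · exact hzcb h1.symm
  have hF3card : F3.ncard = 3 := by
    rw [hF3def]
    rw [Set.ncard_insert_of_notMem (by simp [hne12, hne13]) (Set.toFinite _),
      Set.ncard_insert_of_notMem (by simp [hne23]) (Set.toFinite _), Set.ncard_singleton]
  have hF3cross : F3 ⊆ crossSet G X := by
    intro e he
    simp only [hF3def, Set.mem_insert_iff, Set.mem_singleton_iff] at he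
    rcases he with rfl | rfl | rfl
    · exact mem_crossSet.mpr ⟨a, haX, za, hzaX, hAaza, rfl⟩
    · exact mem_crossSet.mpr ⟨b, hbX, zb, hzbX, hAbzb, rfl⟩
    · exact mem_crossSet.mpr ⟨c, hcX, zc, hzcX, hAczc, rfl⟩
  refine ⟨F3, hF3sub, hF3card, ?_⟩
  set G3 := G.deleteEdges F3 with hG3
  -- which pairs are in F3
  have honly : ∀ v z : V, s(v, z) ∈ F3 →
      (v = a ∧ z = za) ∨ (v = za ∧ z = a) ∨ (v = b ∧ z = zb) ∨ (v = zb ∧ z = b) ∨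
      (v = c ∧ z = zc) ∨ (v = zc ∧ z = c) := by
    intro v z hz
    simp only [hF3def, Set.mem_insert_iff, Set.mem_singleton_iff] at hz
    rcases hz with h | h | h
    · rcases Sym2.eq_iff.mp h with ⟨h1, h2⟩ | ⟨h1, h2⟩
      · exact Or.inl ⟨h1, h2⟩
      · exact Or.inr (Or.inl ⟨h1, h2⟩)
    · rcases Sym2.eq_iff.mp h with ⟨h1, h2⟩ | ⟨h1, h2⟩
      · exact Or.inr (Or.inr (Or.inl ⟨h1, h2⟩))
      · exact Or.inr (Or.inr (Or.inr (Or.inl ⟨h1, h2⟩)))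
    · rcases Sym2.eq_iff.mp h with ⟨h1, h2⟩ | ⟨h1, h2⟩
      · exact Or.inr (Or.inr (Or.inr (Or.inr (Or.inl ⟨h1, h2⟩))))
      · exact Or.inr (Or.inr (Or.inr (Or.inr (Or.inr ⟨h1, h2⟩))))
  -- minimum degree 4 in G3
  have hdeg4 : ∀ v, 4 ≤ degN G3 v := by
    intro v
    obtain ⟨u, hu⟩ : ∃ u, ∀ z, s(v, z) ∈ F3 → z = u := by
      refine ⟨if v = a then za else if v = za then a else if v = b then zb
        else if v = zb then b else if v = c then zc else if v = zc then c else v, ?_⟩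
      intro z hz
      rcases honly v z hz with ⟨rfl, rfl⟩ | ⟨rfl, rfl⟩ | ⟨rfl, rfl⟩ | ⟨rfl, rfl⟩ |
        ⟨rfl, rfl⟩ | ⟨rfl, rfl⟩
      · simp
      · simp [hzaa]
      · simp [hab.symm, hzab.symm]
      · simp [hzba, hzbza, hzbb]
      · simp [hac.symm, hzac.symm, hbc.symm, hzbc.symm]
      · simp [hzca, hzcza, hzcb, hzczb, hzcc]
    have hsubv : G.neighborSet v \ {u} ⊆ G3.neighborSet v := by
      intro z hz
      have hadj : G.Adj v z := hz.1
      have hzu : z ≠ u := by simpa using hz.2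
      rw [SimpleGraph.mem_neighborSet, hG3, SimpleGraph.deleteEdges_adj]
      exact ⟨hadj, fun hmem => hzu (hu z hmem)⟩
    have h1 : (G.neighborSet v \ {u}).ncard ≤ degN G3 v :=
      Set.ncard_le_ncard hsubv (Set.toFinite _)
    have h2 : G.neighborSet v ⊆ insert u (G.neighborSet v \ {u}) := by
      intro z hz
      by_cases hzu : z = u
      · rw [hzu]; exact Set.mem_insert _ _
      · exact Set.mem_insert_of_mem _ ⟨hz, hzu⟩
    have h3 := Set.ncard_le_ncard h2 (Set.toFinite _)
    have h4 := Set.ncard_insert_le u (G.neighborSet v \ {u})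
    have h5 := hreg v
    unfold degN at *
    omega
  -- exact degrees of the triangle vertices in G3
  have hdega : degN G3 a = 4 := by
    have h1 := degN_deleteEdges_lt (F := F3) (v := a) (w := za) (by simp [hF3def]) hAaza
    have h2 := hdeg4 a
    have h3 := hreg a
    rw [← hG3] at h1
    omega
  have hdegb : degN G3 b = 4 := by
    have h1 := degN_deleteEdges_lt (F := F3) (v := b) (w := zb) (by simp [hF3def]) hAbzb
    have h2 := hdeg4 b
    have h3 := hreg b
    rw [← hG3] at h1
    omega
  -- internal triangle edges survive
  have hkeep : ∀ x y : V, x ∈ X → y ∈ X → G.Adj x y → G3.Adj x y := by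
    intro x y hx hy hxy
    rw [hG3, SimpleGraph.deleteEdges_adj]
    refine ⟨hxy, fun hmem => ?_⟩
    exact not_mem_crossSet_of_both hx hy (hF3cross hmem)
  have hG3ab : G3.Adj a b := hkeep a b haX hbX hAab
  -- ξ(G3) = 6
  have hdo6 : dOut G3 {a, b} = 6 := by
    have := dOut_pair hG3ab
    omega
  have hxile : xiH G3 1 ≤ 6 := by
    refine le_trans (Nat.sInf_le ⟨{a, b}, by rw [ncard_pair hab], adj_pair_conn hG3ab, rfl⟩) ?_
    omega
  have hxige : 6 ≤ xiH G3 1 := by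
    refine le_csInf ⟨dOut G3 {a, b}, {a, b}, by rw [ncard_pair hab],
      adj_pair_conn hG3ab, rfl⟩ ?_
    rintro n ⟨X0, hX0c, hX0conn, rfl⟩
    obtain ⟨x, y, hne, rfl⟩ := Set.ncard_eq_two.mp (by omega : X0.ncard = 2)
    have hadj : G3.Adj x y := pair_conn_adj hne hX0conn
    have hdo := dOut_pair hadj
    have h4x := hdeg4 x
    have h4y := hdeg4 y
    omega
  -- the remaining 6 cross edges
  set F' : Set (Sym2 V) := F0 \ F3 with hF'def
  have hF3subF0 : F3 ⊆ F0 := by rw [← hcrX]; exact hF3cross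
  have hF'card : F'.ncard = 6 := by
    rw [hF'def, Set.ncard_diff hF3subF0 (Set.toFinite _), hF0card, hF3card]
  have hunion : F3 ∪ F' = F0 := Set.union_diff_cancel hF3subF0
  have hG3F' : G3.deleteEdges F' = G.deleteEdges F0 := by
    rw [hG3, SimpleGraph.deleteEdges_deleteEdges, hunion]
  have hcutF' : IsExtraEdgeCut G3 1 F' := by
    refine ⟨?_, ?_, ?_⟩
    · rw [hG3, SimpleGraph.edgeSet_deleteEdges]
      intro e he
      exact ⟨hF0cut.1 he.1, he.2⟩
    · rw [hG3F']; exact hF0cut.2.1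
    · rw [hG3F']
      intro c'
      have := hF0cut.2.2 c'
      omega
  -- the contradiction
  intro hsup3
  have hlam3le : lambdaH G3 1 ≤ 6 := by
    have h1 : lambdaH G3 1 ≤ F'.ncard := Nat.sInf_le ⟨_, hcutF', rfl⟩
    omega
  have hlam3 : lambdaH G3 1 = 6 := by
    have h2 := hsup3.2.2.1
    omega
  obtain ⟨c2, hc2⟩ := hsup3.2.2.2 F' hcutF' (by omega)
  have hall := hF0cut.2.2
  rw [← hG3F'] at hall
  have := hall c2
  omega

end Master2

/-- For a `k`-regular super-`λ''` graph with girth `3`: if `k ≥ 6` then it is super-`λ'`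
with `ρ'(G) ≥ k - 3`; if `k = 5` then it is super-`λ'` with `ρ'(G) = 2`. -/
theorem stmt15 {V : Type*} [Fintype V] (G : SimpleGraph V) (k : ℕ)
    (hreg : ∀ v, degN G v = k) (hs : SuperLambda G 2) (hg : G.egirth = 3) :
    (6 ≤ k → SuperLambda G 1 ∧ k - 3 ≤ rhoH G 1) ∧
    (k = 5 → SuperLambda G 1 ∧ rhoH G 1 = 2) := by
  classical
  set S := {m : ℕ | ∀ F : Set (Sym2 V), F ⊆ G.edgeSet → F.ncard ≤ m →
    SuperLambda (G.deleteEdges F) 1} with hSdef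
  have hrho : rhoH G 1 = sSup S := rfl
  have main : ∀ (hk5 : 5 ≤ k),
      (∀ m, m + 3 ≤ k → m ∈ S) ∧ BddAbove S ∧ SuperLambda G 1 := by
    intro hk5
    have hmemS : ∀ m, m + 3 ≤ k → m ∈ S := by
      intro m hm F hFE hFc
      exact master1 G k hreg hs hk5 F hFE (by omega)
    have hbdd : BddAbove S := by
      refine ⟨G.edgeSet.ncard, fun m hm => ?_⟩
      by_contra hlt
      push_neg at hlt
      have hsup := hm G.edgeSet le_rfl (le_of_lt hlt)
      -- the edgeless graph is disconnected
      obtain ⟨v⟩ := hs.1.nonempty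
      have hdeg := hreg v
      obtain ⟨w, hw⟩ := Set.nonempty_of_ncard_ne_zero (s := G.neighborSet v)
        (by unfold degN at hdeg; omega)
      have hvw : v ≠ w := (SimpleGraph.mem_neighborSet _ _ _ |>.mp hw).ne
      have hnc : ¬ (G.deleteEdges G.edgeSet).Connected := by
        intro hcon
        obtain ⟨p⟩ := hcon.preconnected v w
        cases p with
        | nil => exact hvw rfl
        | @cons _ z _ h _ =>
          obtain ⟨h1, h2⟩ := SimpleGraph.deleteEdges_adj.mp h
          exact h2 ((G.mem_edgeSet).mpr h1)
      exact hnc hsup.1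
    have hsl : SuperLambda G 1 := by
      have h0 := hmemS 0 (by omega) ∅ (Set.empty_subset _) (by simp)
      rwa [SimpleGraph.deleteEdges_empty] at h0
    exact ⟨hmemS, hbdd, hsl⟩
  constructor
  · intro hk6
    obtain ⟨hmemS, hbdd, hsl⟩ := main (by omega)
    refine ⟨hsl, ?_⟩
    rw [hrho]
    exact le_csSup hbdd (hmemS (k - 3) (by omega))
  · intro hk5
    subst hk5
    obtain ⟨hmemS, hbdd, hsl⟩ := main (by omega)
    refine ⟨hsl, ?_⟩
    rw [hrho]
    refine le_antisymm ?_ (le_csSup hbdd (hmemS 2 (by omega)))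
    refine csSup_le ⟨0, hmemS 0 (by omega)⟩ ?_
    intro m hm
    by_contra hm3
    push_neg at hm3
    obtain ⟨F3, hF3sub, hF3card, hF3not⟩ := master2 G hreg hs hg
    exact hF3not (hm F3 hF3sub (by omega))
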